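/- Let R be a commutative ring and M an R-module. The R-linear corepresentable functor Hom_R(M, −) : ModuleCat R ⥤ ModuleCat R (i.e. (linearCoyoneda R (ModuleCat R)).obj (Opposite.op (ModuleCat.of R M))) preserves all small colimits if and only if M is finitely generated and projective. In other words, the tiny objects of ModuleCat R are exactly the finitely generated projective modules. -/

import Mathlib

open CategoryTheory CategoryTheory.Limits

universe u

section RetractPreserves

universe w w' v₁ v₂ u₁ u₂

variable {C : Type u₁} [Category.{v₁} C] {D : Type u₂} [Category.{v₂} D]

/-- A natural retract of a colimit-preserving functor preserves colimits. -/
lemma preservesColimit_of_natRetract {F G : C ⥤ D} (i : F ⟶ G) (r : G ⟶ F)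
    (hir : i ≫ r = 𝟙 F) {J : Type w} [Category.{w'} J] (K : J ⥤ C) [PreservesColimit K G] :
    PreservesColimit K F where
  preserves {c} hc := by
    have hG := isColimitOfPreserves G hc
    have hirapp : ∀ X : C, i.app X ≫ r.app X = 𝟙 (F.obj X) := fun X => by
      rw [← NatTrans.comp_app, hir]; rfl
    constructor
    refine IsColimit.mk (fun s => i.app c.pt ≫ hG.desc ⟨s.pt, Functor.whiskerLeft K r ≫ s.ι⟩) ?_ ?_
    · intro s j
      have h1 := i.naturality (c.ι.app j)
      dsimp at h1 ⊢
      have h4 := hG.fac ⟨s.pt, Functor.whiskerLeft K r ≫ s.ι⟩ j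
      dsimp at h4
      rw [← Category.assoc, h1, Category.assoc, h4, ← Category.assoc, hirapp,
        Category.id_comp]
    · intro s m hm
      have h2 : r.app c.pt ≫ m = hG.desc ⟨s.pt, Functor.whiskerLeft K r ≫ s.ι⟩ := by
        apply hG.uniq ⟨s.pt, Functor.whiskerLeft K r ≫ s.ι⟩
        intro j
        have h3 := r.naturality (c.ι.app j)
        have h5 := hm j
        dsimp at h3 h5 ⊢
        rw [← Category.assoc, h3, Category.assoc, h5]
      show m = i.app c.pt ≫ hG.desc ⟨s.pt, Functor.whiskerLeft K r ≫ s.ι⟩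
      rw [← h2, ← Category.assoc, hirapp, Category.id_comp]

/-- A natural retract of a colimit-preserving functor preserves colimits. -/
lemma preservesColimits_of_natRetract {F G : C ⥤ D} (i : F ⟶ G) (r : G ⟶ F)
    (hir : i ≫ r = 𝟙 F) [PreservesColimitsOfSize.{w, w'} G] :
    PreservesColimitsOfSize.{w, w'} F where
  preservesColimitsOfShape {J} _ :=
    { preservesColimit := fun {K} => preservesColimit_of_natRetract i r hir K }

end RetractPreserves

section ModuleColimits

variable {R : Type u} [CommRing R]

/-- In `ModuleCat R`, the images of the legs of a colimit cocone span the cocone point. -/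
lemma moduleCat_isColimit_iSup_range_eq_top {J : Type u} [Category.{u} J]
    {K : J ⥤ ModuleCat.{u} R} {c : Cocone K} (hc : IsColimit c) :
    (⨆ j, LinearMap.range (c.ι.app j).hom : Submodule R c.pt) = ⊤ := by
  set S : Submodule R c.pt := ⨆ j, LinearMap.range (c.ι.app j).hom with hS
  have h : (ModuleCat.ofHom S.mkQ : c.pt ⟶ ModuleCat.of R (c.pt ⧸ S)) = 0 := by
    refine hc.hom_ext (W := ModuleCat.of R ((c.pt : Type u) ⧸ S)) fun j => ?_
    ext y
    show S.mkQ ((c.ι.app j).hom y) = 0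
    rw [Submodule.mkQ_apply, Submodule.Quotient.mk_eq_zero]
    exact Submodule.mem_iSup_of_mem j (LinearMap.mem_range_self _ y)
  rw [Submodule.eq_top_iff']
  intro x
  have hx : S.mkQ x = 0 := DFunLike.congr_fun (congrArg ModuleCat.Hom.hom h) x
  rw [Submodule.mkQ_apply, Submodule.Quotient.mk_eq_zero] at hx
  exact hx

end ModuleColimits


section Cofan

variable (R : Type u) [CommRing R]

noncomputable section

/-- The cofan on the constant family `A` with apex `ι →₀ A` and legs `Finsupp.lsingle`. -/
def finsuppCofan (ι : Type u) (A : Type u) [AddCommGroup A] [Module R A] :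
    Cofan (fun _ : ι => ModuleCat.of R A) :=
  Cofan.mk (ModuleCat.of R (ι →₀ A)) fun i =>
    ModuleCat.ofHom (Finsupp.lsingle i : A →ₗ[R] ι →₀ A)

/-- The finsupp cofan is a colimit. -/
def finsuppCofanIsColimit (ι : Type u) (A : Type u) [AddCommGroup A] [Module R A] :
    IsColimit (finsuppCofan R ι A) :=
  mkCofanColimit _
    (fun t => ModuleCat.ofHom (Finsupp.lsum ℕ (fun i => ((t.inj i : ModuleCat.of R A ⟶ t.pt).hom : A →ₗ[R] t.pt)) :
      (ι →₀ A) →ₗ[R] t.pt))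
    (fun t i => by
      ext a
      show Finsupp.lsum ℕ (fun i => ((t.inj i : ModuleCat.of R A ⟶ t.pt).hom : A →ₗ[R] t.pt))
        (Finsupp.single i a) = (t.inj i).hom a
      rw [Finsupp.lsum_single])
    (fun t m hm => by
      refine ModuleCat.hom_ext (Finsupp.lhom_ext' fun i => ?_)
      refine LinearMap.ext fun a => ?_
      show m.hom (Finsupp.single i a) = Finsupp.lsum ℕ
        (fun i => ((t.inj i : ModuleCat.of R A ⟶ t.pt).hom : A →ₗ[R] t.pt)) (Finsupp.single i a)
      rw [Finsupp.lsum_single]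
      exact DFunLike.congr_fun (congrArg ModuleCat.Hom.hom (hm i)) a)

/-- The natural isomorphism between tensoring with the dual of `Rⁿ` and `Hom(Rⁿ, −)`. -/
noncomputable def dualTensorNatIso (n : ℕ) :
    MonoidalCategory.tensorLeft (ModuleCat.of R (Module.Dual R (Fin n → R))) ≅
      (linearCoyoneda R (ModuleCat.{u} R)).obj (Opposite.op (ModuleCat.of R (Fin n → R))) :=
  NatIso.ofComponents
    (fun N => (dualTensorHomEquiv R (Fin n → R) N ≪≫ₗ (ModuleCat.homLinearEquiv (S := R) (M := ModuleCat.of R (Fin n → R)) (N := N)).symm).toModuleIso)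
    (fun {N N'} g => by
      refine ModuleCat.hom_ext (TensorProduct.ext' fun f y => ?_)
      refine ModuleCat.hom_ext (LinearMap.ext fun v => ?_)
      show (dualTensorHomEquiv R (Fin n → R) N')
          ((MonoidalCategory.whiskerLeft (ModuleCat.of R (Module.Dual R (Fin n → R))) g)
            (f ⊗ₜ y)) v =
        g ((dualTensorHomEquiv R (Fin n → R) N) (f ⊗ₜ y) v)
      erw [ModuleCat.MonoidalCategory.whiskerLeft_apply]
      simp only [dualTensorHomEquiv, LinearEquiv.ofBijective_apply, dualTensorHom_apply,
        map_smul])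

end

end Cofan

/-- The tiny objects of the category of `R`-modules are exactly the finitely generated
projective modules: `Hom_R(M, −)` preserves all small colimits iff `M` is f.g. projective. -/
theorem moduleCat_tiny_iff_fg_projective (R : Type u) [CommRing R]
    (M : Type u) [AddCommGroup M] [Module R M] :
    Nonempty (PreservesColimits
      ((linearCoyoneda R (ModuleCat.{u} R)).obj (Opposite.op (ModuleCat.of R M)))) ↔
    Module.Finite R M ∧ Module.Projective R M := by
  constructor
  · rintro ⟨hF⟩
    set F := (linearCoyoneda R (ModuleCat.{u} R)).obj (Opposite.op (ModuleCat.of R M)) with hFdef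
    have hproj : Module.Projective R M := by
      apply Module.Projective.of_lifting_property''
      intro f hf
      haveI : PreservesColimitsOfSize.{0, 0} F := preservesColimitsOfSize_shrink.{0, u, 0, u} F
      haveI : Epi (ModuleCat.ofHom f) := (ModuleCat.epi_iff_surjective (ModuleCat.ofHom f)).2 hf
      have hepi : Epi (F.map (ModuleCat.ofHom f)) := F.map_epi _
      obtain ⟨h, hh⟩ := (ModuleCat.epi_iff_surjective _).1 hepi
        (show ModuleCat.of R M ⟶ ModuleCat.of R M from ModuleCat.ofHom LinearMap.id)
      exact ⟨h.hom, congrArg ModuleCat.Hom.hom hh⟩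
    refine ⟨?_, hproj⟩
    obtain ⟨s, hs⟩ := Module.projective_def.mp hproj
    have hc := finsuppCofanIsColimit R M R
    have hFc : IsColimit (F.mapCocone (finsuppCofan R M R)) := isColimitOfPreserves F hc
    have htop := moduleCat_isColimit_iSup_range_eq_top hFc
    set sElt : ((F.mapCocone (finsuppCofan R M R)).pt : Type u) :=
      ModuleCat.ofHom (s : M →ₗ[R] M →₀ R) with hsElt
    have hmem : sElt ∈ ⨆ j, LinearMap.range ((F.mapCocone (finsuppCofan R M R)).ι.app j).hom := by
      exact (Submodule.eq_top_iff'.mp htop) sElt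
    have key : ∃ N : Submodule R M, N.FG ∧
        ∀ x : M, Finsupp.linearCombination R (id : M → M)
          ((show ModuleCat.of R M ⟶ ModuleCat.of R (M →₀ R) from sElt).hom x) ∈ N := by
      refine Submodule.iSup_induction
        (motive := fun (g : ((F.mapCocone (finsuppCofan R M R)).pt : Type u)) =>
          ∃ N : Submodule R M, N.FG ∧ ∀ x : M, Finsupp.linearCombination R (id : M → M)
            ((show ModuleCat.of R M ⟶ ModuleCat.of R (M →₀ R) from g).hom x) ∈ N) _ hmem ?_ ?_ ?_
      · rintro ⟨m⟩ g ⟨f, rfl⟩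
        refine ⟨Submodule.span R {m}, Submodule.fg_span_singleton m, fun x => ?_⟩
        show Finsupp.linearCombination R (id : M → M)
          (Finsupp.single m ((show ModuleCat.of R M ⟶ ModuleCat.of R R from f).hom x)) ∈ _
        rw [Finsupp.linearCombination_single]
        exact Submodule.smul_mem _ _ (Submodule.mem_span_singleton_self m)
      · refine ⟨⊥, Submodule.fg_bot, fun x => ?_⟩
        show Finsupp.linearCombination R (id : M → M) ((0 : M →ₗ[R] M →₀ R) x) ∈ _
        simp
      · rintro g₁ g₂ ⟨N₁, hN₁, h₁⟩ ⟨N₂, hN₂, h₂⟩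
        refine ⟨N₁ ⊔ N₂, hN₁.sup hN₂, fun x => ?_⟩
        show Finsupp.linearCombination R (id : M → M)
          (((show ModuleCat.of R M ⟶ ModuleCat.of R (M →₀ R) from g₁).hom + (show ModuleCat.of R M ⟶ ModuleCat.of R (M →₀ R) from g₂).hom) x) ∈ _
        rw [LinearMap.add_apply, map_add]
        exact Submodule.add_mem _ (Submodule.mem_sup_left (h₁ x)) (Submodule.mem_sup_right (h₂ x))
    obtain ⟨N, hNfg, hN⟩ := key
    have hNtop : N = ⊤ := by
      rw [Submodule.eq_top_iff']
      intro x
      have hx : Finsupp.linearCombination R (id : M → M) (s x) ∈ N := hN x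
      rwa [hs x] at hx
    exact ⟨hNtop ▸ hNfg⟩
  · rintro ⟨hfin, hproj⟩
    obtain ⟨n, π, s, hπ, hinj, hcomp⟩ := Module.Finite.exists_comp_eq_id_of_projective R M
    have hcomp' : ModuleCat.ofHom s ≫ ModuleCat.ofHom π = 𝟙 (ModuleCat.of R M) := by
      ext x
      exact DFunLike.congr_fun hcomp x
    set X := ModuleCat.of R (Module.Dual R (Fin n → R)) with hX
    haveI : PreservesColimits (MonoidalCategory.tensorLeft X) :=
      (ihom.adjunction X).leftAdjoint_preservesColimits
    haveI hG : PreservesColimits ((linearCoyoneda R (ModuleCat.{u} R)).obj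
        (Opposite.op (ModuleCat.of R (Fin n → R)))) :=
      preservesColimits_of_natIso (dualTensorNatIso R n)
    exact ⟨preservesColimits_of_natRetract
      ((linearCoyoneda R (ModuleCat.{u} R)).map (ModuleCat.ofHom π).op)
      ((linearCoyoneda R (ModuleCat.{u} R)).map (ModuleCat.ofHom s).op)
      (by
        rw [← Functor.map_comp, ← op_comp, hcomp', op_id]
        exact (linearCoyoneda R (ModuleCat.{u} R)).map_id _)⟩
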